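/- Let Π be a probability density on ℝ symmetric about 0 with finite first moment, and define g(α) = α·∫ θ·exp(αθ)/(1+exp(αθ))·Π(θ) dθ for α > 0. Then g is continuous, strictly increasing, g(α) → 0 as α → 0⁺, and g(α) → ∞ as α → ∞; hence there exists a unique α*₀ > 0 with g(α*₀) = 1, provided Π is not degenerate at 0. -/

import Mathlib

open Real MeasureTheory Filter

noncomputable def p1 (α θ : ℝ) : ℝ := Real.exp (α * θ) / (1 + Real.exp (α * θ))

section aux

noncomputable def Lgst (x : ℝ) : ℝ := Real.exp x / (1 + Real.exp x)

lemma Lgst_denom_pos (x : ℝ) : (0:ℝ) < 1 + Real.exp x := by positivity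

lemma Lgst_strictMono : StrictMono Lgst := by
  intro x y h
  have hx := Real.exp_pos x
  have hy := Real.exp_pos y
  have hxy := Real.exp_lt_exp.2 h
  rw [Lgst, Lgst, div_lt_div_iff₀ (Lgst_denom_pos x) (Lgst_denom_pos y)]
  nlinarith

lemma Lgst_zero : Lgst 0 = 1/2 := by simp [Lgst]; norm_num

lemma Lgst_nonneg (x : ℝ) : 0 ≤ Lgst x :=
  div_nonneg (Real.exp_pos x).le (Lgst_denom_pos x).le

lemma Lgst_le_one (x : ℝ) : Lgst x ≤ 1 := by
  rw [Lgst, div_le_one (Lgst_denom_pos x)]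
  linarith

lemma p1_eq_Lgst (a θ : ℝ) : p1 a θ = Lgst (a * θ) := rfl

lemma Lgst_continuous : Continuous Lgst :=
  Real.continuous_exp.div (continuous_const.add Real.continuous_exp)
    (fun x => (Lgst_denom_pos x).ne')

lemma q_nonneg {a : ℝ} (ha : 0 ≤ a) (θ : ℝ) : 0 ≤ θ * (Lgst (a * θ) - 1/2) := by
  rcases le_or_gt 0 θ with h | h
  · have h1 : Lgst 0 ≤ Lgst (a * θ) := Lgst_strictMono.monotone (by nlinarith)
    rw [Lgst_zero] at h1
    nlinarith
  · have h1 : Lgst (a * θ) ≤ Lgst 0 := Lgst_strictMono.monotone (by nlinarith)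
    rw [Lgst_zero] at h1
    nlinarith

lemma q_mono {a b : ℝ} (ha : 0 ≤ a) (hab : a ≤ b) (θ : ℝ) :
    θ * (Lgst (a * θ) - 1/2) ≤ θ * (Lgst (b * θ) - 1/2) := by
  rcases lt_trichotomy θ 0 with h | h | h
  · have h1 : Lgst (b * θ) ≤ Lgst (a * θ) := Lgst_strictMono.monotone (by nlinarith)
    nlinarith
  · simp [h]
  · have h1 : Lgst (a * θ) ≤ Lgst (b * θ) := Lgst_strictMono.monotone (by nlinarith)
    nlinarith

lemma q_pos {b θ : ℝ} (hb : 0 < b) (hθ : θ ≠ 0) : 0 < θ * (Lgst (b * θ) - 1/2) := by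
  rcases lt_or_gt_of_ne hθ with h | h
  · have h1 : Lgst (b * θ) < Lgst 0 := Lgst_strictMono (by nlinarith)
    rw [Lgst_zero] at h1
    nlinarith
  · have h1 : Lgst 0 < Lgst (b * θ) := Lgst_strictMono (by nlinarith)
    rw [Lgst_zero] at h1
    nlinarith

end aux

theorem twoPL_optimal_alpha_psi0 (w : ℝ → ℝ) (hnn : ∀ θ, 0 ≤ w θ)
    (hsym : ∀ θ, w (-θ) = w θ) (hprob : ∫ θ, w θ = 1)
    (hInt : ∀ a : ℝ, Integrable (fun θ => |θ| * Real.exp (a * |θ|) * w θ))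
    (hnondeg : ∃ ε > (0 : ℝ), 0 < ∫ θ in {x : ℝ | ε ≤ |x|}, w θ) :
    ∀ g : ℝ → ℝ, (∀ a, g a = a * ∫ θ, θ * p1 a θ * w θ) →
      ContinuousOn g (Set.Ioi 0)
      ∧ StrictMonoOn g (Set.Ioi 0)
      ∧ Tendsto g (nhdsWithin 0 (Set.Ioi 0)) (nhds 0)
      ∧ Tendsto g atTop atTop
      ∧ ∃! a : ℝ, 0 < a ∧ g a = 1 := by
  intro g hg
  -- basic integrability
  have hInt0 : Integrable (fun θ : ℝ => |θ| * w θ) := by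
    simpa using hInt 0
  have hae0 : ∀ᵐ θ : ℝ, θ ≠ 0 := by
    rw [ae_iff]
    have h : {a : ℝ | ¬a ≠ 0} = {(0:ℝ)} := by ext x; simp
    rw [h]
    exact measure_singleton 0
  have hw_aesm : AEStronglyMeasurable w (volume : Measure ℝ) := by
    refine (hInt0.aestronglyMeasurable.mul
      (Measurable.aestronglyMeasurable measurable_abs.inv)).congr ?_
    filter_upwards [hae0] with θ hθ
    have hne : |θ| ≠ 0 := abs_ne_zero.2 hθ
    show |θ| * w θ * |θ|⁻¹ = w θ
    rw [mul_comm (|θ|) (w θ), mul_assoc, mul_inv_cancel₀ hne, mul_one]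
  have key_int : ∀ f : ℝ → ℝ, Continuous f → (∀ θ, |f θ| ≤ |θ|) →
      Integrable (fun θ => f θ * w θ) := by
    intro f hf hbd
    refine hInt0.mono' (hf.aestronglyMeasurable.mul hw_aesm) ?_
    filter_upwards with θ
    rw [norm_mul, Real.norm_eq_abs, Real.norm_eq_abs, abs_of_nonneg (hnn θ)]
    exact mul_le_mul_of_nonneg_right (hbd θ) (hnn θ)
  set F : ℝ → ℝ := fun a => ∫ θ, θ * (Lgst (a * θ) - 1/2) * w θ with hF
  have hqcont : ∀ a : ℝ, Continuous fun θ => θ * (Lgst (a * θ) - 1/2) :=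
    fun a => continuous_id.mul ((Lgst_continuous.comp (continuous_const.mul continuous_id)).sub
      continuous_const)
  have hqbd : ∀ a θ : ℝ, |θ * (Lgst (a * θ) - 1/2)| ≤ |θ| := by
    intro a θ
    rw [abs_mul]
    have h1 : |Lgst (a * θ) - 1/2| ≤ 1 := by
      rw [abs_le]
      constructor <;> [linarith [Lgst_nonneg (a*θ)]; linarith [Lgst_le_one (a*θ)]]
    calc |θ| * |Lgst (a * θ) - 1/2| ≤ |θ| * 1 :=
          mul_le_mul_of_nonneg_left h1 (abs_nonneg θ)
      _ = |θ| := mul_one _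
  have intq : ∀ a : ℝ, Integrable (fun θ => θ * (Lgst (a * θ) - 1/2) * w θ) :=
    fun a => key_int _ (hqcont a) (hqbd a)
  have int_tw : Integrable (fun θ : ℝ => θ * w θ) :=
    key_int _ continuous_id (fun θ => le_refl _)
  -- ∫ θ w θ = 0 by symmetry
  have hzero : ∫ θ : ℝ, θ * w θ = 0 := by
    have h1 : ∫ θ : ℝ, -(θ * w θ) = ∫ θ : ℝ, θ * w θ := by
      have := integral_neg_eq_self (fun θ : ℝ => θ * w θ) volume
      simpa [hsym, neg_mul] using this
    rw [integral_neg] at h1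
    linarith
  -- g a = a * F a
  have hgF : ∀ a, g a = a * F a := by
    intro a
    rw [hg a]
    congr 1
    have heq : (fun θ : ℝ => θ * p1 a θ * w θ)
        = fun θ => θ * (Lgst (a * θ) - 1/2) * w θ + (1/2) * (θ * w θ) := by
      funext θ
      rw [p1_eq_Lgst]
      ring
    rw [heq, integral_add (intq a) (int_tw.const_mul _), integral_const_mul, hzero]
    simp [hF]
  -- F nondecreasing on [0, ∞)
  have hFmono : ∀ a b : ℝ, 0 ≤ a → a ≤ b → F a ≤ F b := by
    intro a b ha hab
    exact integral_mono (intq a) (intq b)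
      (fun θ => mul_le_mul_of_nonneg_right (q_mono ha hab θ) (hnn θ))
  -- F positive on (0, ∞)
  obtain ⟨ε, hε, hεpos⟩ := hnondeg
  have hS : MeasurableSet {x : ℝ | ε ≤ |x|} :=
    measurableSet_le measurable_const measurable_abs
  have hApos : 0 < volume {x : ℝ | ε ≤ |x| ∧ w x ≠ 0} := by
    by_contra h
    push_neg at h
    have hA0 : volume {x : ℝ | ε ≤ |x| ∧ w x ≠ 0} = 0 := le_antisymm h zero_le
    have hae : ∀ᵐ x ∂(volume.restrict {x : ℝ | ε ≤ |x|}), w x = 0 := by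
      rw [ae_restrict_iff' hS, ae_iff]
      refine measure_mono_null ?_ hA0
      intro x hx
      simp only [Set.mem_setOf_eq, Classical.not_imp] at hx
      exact hx
    have : ∫ θ in {x : ℝ | ε ≤ |x|}, w θ = 0 := by
      rw [integral_congr_ae hae]
      simp
    linarith
  have hFpos : ∀ a : ℝ, 0 < a → 0 < F a := by
    intro a ha
    have hnnφ : (0 : ℝ → ℝ) ≤ fun θ => θ * (Lgst (a * θ) - 1/2) * w θ :=
      fun θ => mul_nonneg (q_nonneg ha.le θ) (hnn θ)
    rw [hF]
    show 0 < ∫ θ, θ * (Lgst (a * θ) - 1/2) * w θ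
    refine (integral_pos_iff_support_of_nonneg hnnφ (intq a)).2 ?_
    refine lt_of_lt_of_le hApos (measure_mono ?_)
    rintro x ⟨hx1, hx2⟩
    have hx0 : x ≠ 0 := by
      intro h; rw [h] at hx1; simp at hx1; linarith
    have hwx : 0 < w x := lt_of_le_of_ne (hnn x) (Ne.symm hx2)
    exact (mul_pos (q_pos ha hx0) hwx).ne'
  -- F continuous
  have hFcont : Continuous F := by
    rw [hF]
    refine continuous_of_dominated
      (F := fun (a θ : ℝ) => θ * (Lgst (a * θ) - 1/2) * w θ)
      (bound := fun θ : ℝ => |θ| * w θ) ?_ ?_ hInt0 ?_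
    · exact fun a => ((hqcont a).aestronglyMeasurable.mul hw_aesm)
    · intro a
      filter_upwards with θ
      rw [norm_mul, Real.norm_eq_abs, Real.norm_eq_abs, abs_of_nonneg (hnn θ)]
      exact mul_le_mul_of_nonneg_right (hqbd a θ) (hnn θ)
    · filter_upwards with θ
      exact ((continuous_const.mul ((Lgst_continuous.comp (continuous_id.mul
        continuous_const)).sub continuous_const)).mul continuous_const)
  have hgcont : Continuous g := by
    have : g = fun a => a * F a := funext hgF
    rw [this]
    exact continuous_id.mul hFcont
  -- strict monotonicity
  have hmono : StrictMonoOn g (Set.Ioi 0) := by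
    intro a ha b hb hab
    rw [hgF a, hgF b]
    calc a * F a ≤ a * F b :=
          mul_le_mul_of_nonneg_left (hFmono a b (Set.mem_Ioi.mp ha).le hab.le)
            (Set.mem_Ioi.mp ha).le
      _ < b * F b := mul_lt_mul_of_pos_right hab (hFpos b hb)
  -- tendsto at 0⁺
  have htend0 : Tendsto g (nhdsWithin 0 (Set.Ioi 0)) (nhds 0) := by
    have h1 : Tendsto g (nhds 0) (nhds (g 0)) := hgcont.tendsto 0
    have h2 : g 0 = 0 := by rw [hgF]; ring
    rw [h2] at h1
    exact h1.mono_left nhdsWithin_le_nhds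
  -- tendsto atTop
  have htendtop : Tendsto g atTop atTop := by
    have hF1 : 0 < F 1 := hFpos 1 one_pos
    refine tendsto_atTop_mono' atTop ?_ (Tendsto.const_mul_atTop hF1 tendsto_id)
    filter_upwards [eventually_ge_atTop (1:ℝ)] with a ha
    simp only [id_eq]
    rw [hgF a, mul_comm (F 1) a]
    exact mul_le_mul_of_nonneg_left (hFmono 1 a zero_le_one ha) (by linarith)
  refine ⟨hgcont.continuousOn, hmono, htend0, htendtop, ?_⟩
  -- existence and uniqueness
  obtain ⟨a₀, ha₀pos, ha₀⟩ : ∃ a : ℝ, 0 < a ∧ g a < 1 := by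
    have h := (htend0.eventually_lt_const one_pos).and eventually_mem_nhdsWithin
    rcases h.exists with ⟨a, h1, h2⟩
    exact ⟨a, Set.mem_Ioi.mp h2, h1⟩
  obtain ⟨a₁, ha₁gt, ha₁⟩ : ∃ a : ℝ, a₀ < a ∧ 1 < g a := by
    have h := (eventually_gt_atTop a₀).and (htendtop.eventually_gt_atTop 1)
    rcases h.exists with ⟨a, h1, h2⟩
    exact ⟨a, h1, h2⟩
  obtain ⟨a, haI, hga⟩ := intermediate_value_Icc ha₁gt.le hgcont.continuousOn
    ⟨ha₀.le, ha₁.le⟩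
  have haIoi : a ∈ Set.Ioi (0:ℝ) := lt_of_lt_of_le ha₀pos haI.1
  refine ⟨a, ⟨haIoi, hga⟩, ?_⟩
  rintro b ⟨hb, hgb⟩
  exact hmono.injOn (Set.mem_Ioi.mpr hb) haIoi (hgb.trans hga.symm)
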